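/- Let u be a map from ℝ² (with the Euclidean norm) to ℝ³ (with the Euclidean norm) that is differentiable at every x with ‖x‖ > 1/2 and satisfies ‖fderiv u x‖ ≤ c ‖x‖⁻² log(2 + ‖x‖) for all such x, where c > 0. Then there exists a constant C > 0, depending only on c, such that for every R ≥ 4 and all points x, y with 2R/3 ≤ ‖x‖ ≤ 5R/6 and 2R/3 ≤ ‖y‖ ≤ 5R/6, one has ‖u(x) − u(y)‖ ≤ C R⁻¹ log R. -/

import Mathlib

open RealInnerProductSpace

set_option maxHeartbeats 1000000

/-- Segment oscillation bound when the inner product of the endpoints is nonnegative,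
so that the straight segment stays far from the origin. -/
lemma stmt7_seg (c : ℝ) (hc : 0 < c)
    (u : EuclideanSpace ℝ (Fin 2) → EuclideanSpace ℝ (Fin 3))
    (hu : ∀ x : EuclideanSpace ℝ (Fin 2), 1 / 2 < ‖x‖ →
      DifferentiableAt ℝ u x ∧
      ‖fderiv ℝ u x‖ ≤ c * (‖x‖ ^ 2)⁻¹ * Real.log (2 + ‖x‖))
    (R : ℝ) (hR : 4 ≤ R)
    (x y : EuclideanSpace ℝ (Fin 2))
    (hx1 : 2 * R / 3 ≤ ‖x‖) (hx2 : ‖x‖ ≤ 5 * R / 6)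
    (hy1 : 2 * R / 3 ≤ ‖y‖) (hy2 : ‖y‖ ≤ 5 * R / 6)
    (hxy : 0 ≤ ⟪x, y⟫) :
    ‖u x - u y‖ ≤ 15 * c * R⁻¹ * Real.log R := by
  have hR0 : (0:ℝ) < R := by linarith
  have hlogR : 0 < Real.log R := Real.log_pos (by linarith)
  -- every point of the segment has big norm
  have hseg : ∀ z ∈ segment ℝ x y, 2 * R ^ 2 / 9 ≤ ‖z‖ ^ 2 ∧ ‖z‖ ≤ R := by
    rintro z ⟨a, b, ha, hb, hab, rfl⟩
    constructor
    · have h1 : ‖a • x + b • y‖ ^ 2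
          = a ^ 2 * ‖x‖ ^ 2 + 2 * (a * b * ⟪x, y⟫) + b ^ 2 * ‖y‖ ^ 2 := by
        rw [norm_add_sq_real, real_inner_smul_left, real_inner_smul_right,
          norm_smul, norm_smul]
        simp [Real.norm_eq_abs, mul_pow, sq_abs]
        ring
      have hab2 : (1:ℝ)/2 ≤ a ^ 2 + b ^ 2 := by nlinarith [sq_nonneg (a - b)]
      have hx' : (2 * R / 3) ^ 2 ≤ ‖x‖ ^ 2 := by
        apply sq_le_sq' <;> nlinarith [norm_nonneg x]
      have hy' : (2 * R / 3) ^ 2 ≤ ‖y‖ ^ 2 := by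
        apply sq_le_sq' <;> nlinarith [norm_nonneg y]
      nlinarith [mul_nonneg (mul_nonneg ha hb) hxy, sq_nonneg a, sq_nonneg b]
    · calc ‖a • x + b • y‖ ≤ ‖a • x‖ + ‖b • y‖ := norm_add_le _ _
        _ = a * ‖x‖ + b * ‖y‖ := by
            rw [norm_smul, norm_smul, Real.norm_eq_abs, Real.norm_eq_abs,
              abs_of_nonneg ha, abs_of_nonneg hb]
        _ ≤ R := by nlinarith
  have hbig : ∀ z ∈ segment ℝ x y, 1 / 2 < ‖z‖ := by
    intro z hz
    obtain ⟨h1, _⟩ := hseg z hz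
    nlinarith [norm_nonneg z]
  have bound : ∀ z ∈ segment ℝ x y,
      ‖fderiv ℝ u z‖ ≤ 9 * c * (R ^ 2)⁻¹ * Real.log R := by
    intro z hz
    obtain ⟨h1, h2⟩ := hseg z hz
    refine (hu z (hbig z hz)).2.trans ?_
    have hz2 : (0:ℝ) < ‖z‖ ^ 2 := by nlinarith
    have hinv : (‖z‖ ^ 2)⁻¹ ≤ (2 * R ^ 2 / 9)⁻¹ :=
      inv_anti₀ (by positivity) h1
    have hlog : Real.log (2 + ‖z‖) ≤ 2 * Real.log R := by
      have : Real.log (2 + ‖z‖) ≤ Real.log (R ^ 2) := by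
        apply Real.log_le_log (by positivity)
        nlinarith
      rwa [Real.log_pow, Nat.cast_ofNat] at this
    have hlognn : 0 ≤ Real.log (2 + ‖z‖) :=
      Real.log_nonneg (by linarith [norm_nonneg z])
    calc c * (‖z‖ ^ 2)⁻¹ * Real.log (2 + ‖z‖)
        ≤ c * (2 * R ^ 2 / 9)⁻¹ * (2 * Real.log R) := by
          apply mul_le_mul _ hlog hlognn (by positivity)
          exact mul_le_mul_of_nonneg_left hinv hc.le
      _ = 9 * c * (R ^ 2)⁻¹ * Real.log R := by field_simp
  have key : ‖u y - u x‖ ≤ (9 * c * (R ^ 2)⁻¹ * Real.log R) * ‖y - x‖ :=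
    (convex_segment x y).norm_image_sub_le_of_norm_fderiv_le
      (fun z hz => (hu z (hbig z hz)).1) bound (left_mem_segment ℝ x y)
      (right_mem_segment ℝ x y)
  have hdist : ‖y - x‖ ≤ 5 * R / 3 := by
    calc ‖y - x‖ ≤ ‖y‖ + ‖x‖ := norm_sub_le _ _
      _ ≤ 5 * R / 3 := by linarith
  have := key.trans (mul_le_mul_of_nonneg_left hdist (by positivity))
  rw [norm_sub_rev] at this
  refine this.trans (le_of_eq ?_)
  field_simp
  ring

theorem stmt_7 (c : ℝ) (hc : 0 < c) :
    ∃ C : ℝ, 0 < C ∧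
      ∀ u : EuclideanSpace ℝ (Fin 2) → EuclideanSpace ℝ (Fin 3),
        (∀ x : EuclideanSpace ℝ (Fin 2), 1 / 2 < ‖x‖ →
          DifferentiableAt ℝ u x ∧
          ‖fderiv ℝ u x‖ ≤ c * (‖x‖ ^ 2)⁻¹ * Real.log (2 + ‖x‖)) →
        ∀ R : ℝ, 4 ≤ R →
          ∀ x y : EuclideanSpace ℝ (Fin 2),
            2 * R / 3 ≤ ‖x‖ → ‖x‖ ≤ 5 * R / 6 →
            2 * R / 3 ≤ ‖y‖ → ‖y‖ ≤ 5 * R / 6 →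
            ‖u x - u y‖ ≤ C * R⁻¹ * Real.log R := by
  refine ⟨30 * c, by positivity, ?_⟩
  intro u hu R hR x y hx1 hx2 hy1 hy2
  have hR0 : (0:ℝ) < R := by linarith
  have hlogR : 0 < Real.log R := Real.log_pos (by linarith)
  by_cases hxy : 0 ≤ ⟪x, y⟫
  · have := stmt7_seg c hc u hu R hR x y hx1 hx2 hy1 hy2 hxy
    refine this.trans ?_
    have : (0:ℝ) ≤ c * R⁻¹ * Real.log R := by positivity
    nlinarith
  -- otherwise go through a perpendicular intermediate point
  · set w0 : EuclideanSpace ℝ (Fin 2) :=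
      WithLp.toLp 2 (fun i => if i = 0 then -x 1 else x 0 : ∀ _ : Fin 2, ℝ) with hw0
    have hnw0 : ‖w0‖ = ‖x‖ := by
      rw [EuclideanSpace.norm_eq, EuclideanSpace.norm_eq]
      congr 1
      rw [Fin.sum_univ_two, Fin.sum_univ_two]
      simp [hw0]
      ring
    have hinner0 : ⟪x, w0⟫ = 0 := by
      rw [hw0]
      simp [PiLp.inner_apply, Fin.sum_univ_two, RCLike.inner_apply]
      ring
    set w : EuclideanSpace ℝ (Fin 2) := if 0 ≤ ⟪w0, y⟫ then w0 else -w0 with hw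
    have hnw : ‖w‖ = ‖x‖ := by
      rw [hw]; split <;> simp [hnw0]
    have hxw : 0 ≤ ⟪x, w⟫ := by
      rw [hw]; split <;> simp [hinner0, inner_neg_right]
    have hwy : 0 ≤ ⟪w, y⟫ := by
      rw [hw]; split
      · assumption
      · rw [inner_neg_left]; linarith [lt_of_not_ge (by assumption : ¬ 0 ≤ ⟪w0, y⟫)]
    have h1 := stmt7_seg c hc u hu R hR x w hx1 hx2 (hnw ▸ hx1) (hnw ▸ hx2) hxw
    have h2 := stmt7_seg c hc u hu R hR w y (hnw ▸ hx1) (hnw ▸ hx2) hy1 hy2 hwy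
    calc ‖u x - u y‖ ≤ ‖u x - u w‖ + ‖u w - u y‖ := norm_sub_le_norm_sub_add_norm_sub _ _ _
      _ ≤ 15 * c * R⁻¹ * Real.log R + 15 * c * R⁻¹ * Real.log R := add_le_add h1 h2
      _ = 30 * c * R⁻¹ * Real.log R := by ring
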